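/- (Corollary 1, TPBN ≡ NEG for a = 1.) Let b > 0, φ > 0. For every real θ, ∫₀¹ normalPDF(0, 1/ρ − 1)(θ) · f(ρ; 1, b, φ) dρ = ∫₀^∞ ∫₀^∞ normalPDF(0, τ)(θ) · λ e^(−λτ) · gammaPDF(b, φ)(λ) dλ dτ. That is, the TPB normal scale mixture with a = 1 equals the normal-exponential-gamma (NEG) prior, the hierarchy θ | τ ~ N(0, τ), τ ~ Exponential(λ), λ ~ Gamma(b, φ). -/

import Mathlib

open MeasureTheory Real

/-- The three-parameter beta (TPB) density with parameters `a`, `b`, `φ`. -/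
noncomputable def tpb (a b φ x : ℝ) : ℝ :=
  (Real.Gamma (a + b) / (Real.Gamma a * Real.Gamma b)) * φ ^ b * x ^ (b - 1) *
    (1 - x) ^ (a - 1) * (1 + (φ - 1) * x) ^ (-(a + b))

/-- The Gamma density with shape `μ` and rate `ν`, for positive arguments. -/
noncomputable def gammaPDF (μ ν x : ℝ) : ℝ :=
  ν ^ μ * x ^ (μ - 1) * Real.exp (-ν * x) / Real.Gamma μ

/-- The centered normal density with variance `v`. -/
noncomputable def normalPDF (v θ : ℝ) : ℝ :=
  (2 * Real.pi * v) ^ (-(1 : ℝ) / 2) * Real.exp (-θ ^ 2 / (2 * v))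

/-- Corollary 1: the TPB normal scale mixture with a = 1 equals the
normal-exponential-gamma (NEG) prior θ | τ ~ N(0, τ), τ ~ Exponential(λ), λ ~ Gamma(b, φ). -/
theorem tpbn_a_one_eq_neg (b φ : ℝ) (hb : 0 < b) (hφ : 0 < φ) (θ : ℝ) :
    ∫ ρ in Set.Ioo (0 : ℝ) 1, normalPDF (1 / ρ - 1) θ * tpb 1 b φ ρ =
      ∫ τ in Set.Ioi (0 : ℝ), ∫ l in Set.Ioi (0 : ℝ),
        normalPDF τ θ * (l * Real.exp (-l * τ)) * gammaPDF b φ l := by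
  have hG : Real.Gamma b ≠ 0 := (Real.Gamma_pos_of_pos hb).ne'
  -- Step 1: compute the inner λ-integral
  have key : ∀ τ : ℝ, τ ∈ Set.Ioi (0:ℝ) →
      (∫ l in Set.Ioi (0 : ℝ), normalPDF τ θ * (l * Real.exp (-l * τ)) * gammaPDF b φ l)
        = normalPDF τ θ * (b * φ ^ b * (τ + φ) ^ (-(b + 1))) := by
    intro τ hτ
    rw [Set.mem_Ioi] at hτ
    have hτφ : (0:ℝ) < τ + φ := by linarith
    have h1 : ∀ l ∈ Set.Ioi (0:ℝ),
        normalPDF τ θ * (l * Real.exp (-l * τ)) * gammaPDF b φ l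
          = (normalPDF τ θ * φ ^ b / Real.Gamma b) *
            (l ^ ((b + 1) - 1) * Real.exp (-((τ + φ) * l))) := by
      intro l hl
      rw [Set.mem_Ioi] at hl
      unfold gammaPDF
      rw [show (b + 1) - 1 = (b - 1) + 1 by ring, Real.rpow_add hl, Real.rpow_one,
        show -((τ + φ) * l) = (-l * τ) + (-φ * l) by ring, Real.exp_add]
      field_simp
    rw [setIntegral_congr_fun measurableSet_Ioi h1, integral_const_mul,
      Real.integral_rpow_mul_exp_neg_mul_Ioi (by linarith) hτφ,
      Real.Gamma_add_one hb.ne', one_div, Real.inv_rpow hτφ.le, ← Real.rpow_neg hτφ.le]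
    field_simp
  rw [setIntegral_congr_fun measurableSet_Ioi key]
  -- Step 2: change of variables τ ↦ (1+τ)⁻¹ on the RHS-form integral
  have hImg : (fun τ : ℝ => (1 + τ)⁻¹) '' Set.Ioi 0 = Set.Ioo (0:ℝ) 1 := by
    ext ρ
    constructor
    · rintro ⟨τ, hτ, rfl⟩
      rw [Set.mem_Ioi] at hτ
      constructor
      · positivity
      · rw [inv_lt_one_iff₀]; right; linarith
    · rintro ⟨h0, h1⟩
      refine ⟨ρ⁻¹ - 1, ?_, ?_⟩
      · rw [Set.mem_Ioi, sub_pos]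
        exact (one_lt_inv_iff₀).mpr ⟨h0, h1⟩
      · field_simp; ring
  have hDeriv : ∀ τ ∈ Set.Ioi (0:ℝ), HasDerivWithinAt (fun t : ℝ => (1 + t)⁻¹)
      (-1 / (1 + τ) ^ 2) (Set.Ioi 0) τ := by
    intro τ hτ
    rw [Set.mem_Ioi] at hτ
    have h : HasDerivAt (fun t : ℝ => (1 + t)⁻¹) (-1 / (1 + τ) ^ 2) τ := by
      have := ((hasDerivAt_id τ).const_add 1).inv (by positivity : (1:ℝ) + τ ≠ 0)
      exact this
    exact h.hasDerivWithinAt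
  have hInj : Set.InjOn (fun τ : ℝ => (1 + τ)⁻¹) (Set.Ioi 0) := by
    intro a _ c _ h
    have := inv_injective h
    linarith
  rw [← hImg, integral_image_eq_integral_abs_deriv_smul measurableSet_Ioi hDeriv hInj]
  refine setIntegral_congr_fun measurableSet_Ioi fun τ hτ => ?_
  rw [Set.mem_Ioi] at hτ
  have hu : (0:ℝ) < 1 + τ := by linarith
  have hτφ : (0:ℝ) < τ + φ := by linarith
  have e1 : 1 / (1 + τ)⁻¹ - 1 = τ := by field_simp; ring
  have e2 : 1 + (φ - 1) * (1 + τ)⁻¹ = (τ + φ) / (1 + τ) := by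
    field_simp; ring
  have eabs : |(-1 / (1 + τ) ^ 2)| = (1 + τ) ^ (-(2:ℝ)) := by
    rw [abs_div, abs_neg, abs_one, abs_of_pos (by positivity),
      Real.rpow_neg hu.le, Real.rpow_two, one_div]
  simp only [smul_eq_mul, tpb, e1, e2, eabs]
  rw [show (1:ℝ) + b = b + 1 from add_comm 1 b, Real.Gamma_add_one hb.ne', Real.Gamma_one,
    show (1:ℝ) - 1 = 0 by norm_num, Real.rpow_zero,
    Real.div_rpow hτφ.le hu.le, Real.inv_rpow hu.le, ← Real.rpow_neg hu.le]
  have hGg : b * Real.Gamma b / (1 * Real.Gamma b) = b := by field_simp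
  rw [hGg, div_eq_mul_inv _ ((1 + τ) ^ (-(b + 1))), ← Real.rpow_neg hu.le]
  have hpow : (1 + τ) ^ (-(2:ℝ)) * ((1 + τ) ^ (-(b - 1)) * (1 + τ) ^ (-(-(b + 1)))) = 1 := by
    rw [← Real.rpow_add hu, ← Real.rpow_add hu, show -(2:ℝ) + (-(b - 1) + -(-(b + 1))) = 0 by ring,
      Real.rpow_zero]
  linear_combination (normalPDF τ θ * (b * φ ^ b * (τ + φ) ^ (-(b + 1)))) * hpow
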